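/- Define functions D_m : (0,∞) → ℝ recursively by D_0(t) = (4πt)^{-1/2} and D_m(t) = −(e^{−(2m−1)t}/(2(2m−1)π)) D'_{m−1}(t) for m ≥ 1. Then for every m ≥ 1 and t > 0, D_m(t) = (4πt)^{-(2m+1)/2} e^{−m²t} Σ_{k=0}^{m−1} (Γ(m−k+1/2)/Γ(m+1/2)) c_{m,k} t^k, where c_{m,0} = 1 and c_{m,k} = Σ_{1 ≤ i_1 < ⋯ < i_k ≤ m−1} i_1² ⋯ i_k² for 1 ≤ k ≤ m−1. -/

import Mathlib

open Real Finset

/-- `c m k` is the `k`-th elementary symmetric polynomial of `1², 2², …, (m-1)²`. -/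
noncomputable def c (m k : ℕ) : ℝ :=
  ∑ A ∈ (Finset.Icc 1 (m - 1)).powersetCard k, ∏ i ∈ A, (i : ℝ) ^ 2


lemma c_zero (m : ℕ) : c m 0 = 1 := by
  simp [c, Finset.powersetCard_zero]

lemma c_eq_zero {m k : ℕ} (h : m ≤ k) (h1 : 1 ≤ k) : c m k = 0 := by
  have : (Finset.Icc 1 (m-1)).card < k := by
    rw [Nat.card_Icc]; omega
  simp [c, Finset.powersetCard_eq_empty.2 this]

lemma c_rec (m k : ℕ) : c (m+1) (k+1) = c m (k+1) + (m:ℝ)^2 * c m k := by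
  rcases Nat.eq_zero_or_pos m with hm | hm
  · subst hm
    simp [c_eq_zero (by omega : (0:ℕ) ≤ k+1) (by omega), c]
  · have h1 : Finset.Icc 1 ((m+1)-1) = insert m (Finset.Icc 1 (m-1)) := by
      rw [Nat.add_sub_cancel]
      ext x; simp [Finset.mem_Icc, Finset.mem_insert]; omega
    have hnot : m ∉ Finset.Icc 1 (m-1) := by simp [Finset.mem_Icc]; omega
    unfold c
    rw [h1, Finset.powersetCard_succ_insert hnot]
    rw [Finset.sum_union]
    · congr 1
      rw [Finset.sum_image]
      · rw [Finset.mul_sum]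
        refine Finset.sum_congr rfl fun A hA => ?_
        have hmA : m ∉ A := fun hc => hnot ((Finset.mem_powersetCard.1 hA).1 hc)
        rw [Finset.prod_insert hmA]
      · intro A hA B hB hAB
        have hmA : m ∉ A := fun hc => hnot ((Finset.mem_powersetCard.1 hA).1 hc)
        have hmB : m ∉ B := fun hc => hnot ((Finset.mem_powersetCard.1 hB).1 hc)
        rw [← Finset.erase_insert hmA, ← Finset.erase_insert hmB, hAB]
    · rw [Finset.disjoint_right]
      rintro A hA hA'
      obtain ⟨B, hB, rfl⟩ := Finset.mem_image.1 hA
      exact hnot ((Finset.mem_powersetCard.1 hA').1 (Finset.mem_insert_self m B))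

noncomputable def a (m k : ℕ) : ℝ :=
  Real.Gamma ((m : ℝ) - (k : ℝ) + 1 / 2) / Real.Gamma ((m : ℝ) + 1 / 2) * c m k

lemma gamma_half_ne (x : ℝ) (hx : ∃ n : ℤ, x = n + 1/2) : Real.Gamma x ≠ 0 := by
  obtain ⟨n, rfl⟩ := hx
  refine Real.Gamma_ne_zero fun k => ?_
  intro h
  have : (2*n + 1 : ℝ) = -(2*k) := by linarith
  have : (2*n + 1 : ℤ) = -(2*k) := by exact_mod_cast this
  omega

lemma a_zero (m : ℕ) : a m 0 = 1 := by
  unfold a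
  rw [c_zero, mul_one, Nat.cast_zero, sub_zero,
    div_self (gamma_half_ne _ ⟨m, by push_cast; ring⟩)]

lemma a_eq_zero {m k : ℕ} (h : m ≤ k) (h1 : 1 ≤ k) : a m k = 0 := by
  simp [a, c_eq_zero h h1]

lemma key (m k : ℕ) : a (m+1) (k+1) =
    a m (k+1) * (1 - 2*((k:ℝ)+1)/(2*(m:ℝ)+1)) + (2*(m:ℝ)^2/(2*(m:ℝ)+1)) * a m k := by
  have h2m : (2*(m:ℝ)+1) ≠ 0 := by positivity
  have hG : Real.Gamma ((m:ℝ) + 1/2) ≠ 0 := gamma_half_ne _ ⟨m, by push_cast; ring⟩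
  have hG2 : Real.Gamma ((m:ℝ) - (k:ℝ) - 1/2) ≠ 0 := gamma_half_ne _ ⟨(m:ℤ) - k - 1, by push_cast; ring⟩
  have e1 : Real.Gamma ((m:ℝ)+1+1/2) = ((m:ℝ)+1/2) * Real.Gamma ((m:ℝ)+1/2) := by
    rw [show (m:ℝ)+1+1/2 = ((m:ℝ)+1/2)+1 by ring, Real.Gamma_add_one (by
      intro h; have : (0:ℝ) ≤ m := Nat.cast_nonneg m; linarith)]
  have e2 : Real.Gamma ((m:ℝ)+1 - ((k:ℝ)+1) + 1/2) = ((m:ℝ)-(k:ℝ)-1/2) * Real.Gamma ((m:ℝ)-(k:ℝ)-1/2) := by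
    rw [show (m:ℝ)+1-((k:ℝ)+1)+1/2 = ((m:ℝ)-(k:ℝ)-1/2)+1 by ring, Real.Gamma_add_one ?_]
    intro h
    have : (2*(m:ℤ) - 2*(k:ℤ) - 1 : ℝ) = 0 := by push_cast at h ⊢; linarith
    have : (2*(m:ℤ) - 2*(k:ℤ) - 1 : ℤ) = 0 := by exact_mod_cast this
    omega
  have e3 : Real.Gamma ((m:ℝ) - ((k:ℝ)+1) + 1/2) = Real.Gamma ((m:ℝ)-(k:ℝ)-1/2) := by
    norm_num; ring_nf
  have e4 : Real.Gamma ((m:ℝ) - (k:ℝ) + 1/2) = ((m:ℝ)-(k:ℝ)-1/2) * Real.Gamma ((m:ℝ)-(k:ℝ)-1/2) := by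
    rw [show (m:ℝ)-(k:ℝ)+1/2 = ((m:ℝ)-(k:ℝ)-1/2)+1 by ring, Real.Gamma_add_one ?_]
    intro h
    have : (2*(m:ℤ) - 2*(k:ℤ) - 1 : ℝ) = 0 := by push_cast at h ⊢; linarith
    have : (2*(m:ℤ) - 2*(k:ℤ) - 1 : ℤ) = 0 := by exact_mod_cast this
    omega
  unfold a
  push_cast
  rw [e1, e2, e3, e4, c_rec]
  have hm2 : ((m:ℝ)+1/2) ≠ 0 := by positivity
  field_simp
  ring

noncomputable def Q (m : ℕ) (t : ℝ) : ℝ := ∑ k ∈ Finset.range (m+1), a m k * t ^ k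
noncomputable def DQ (m : ℕ) (t : ℝ) : ℝ := ∑ k ∈ Finset.range (m+1), a m k * ((k:ℝ) * t ^ (k-1))

lemma hasDerivAt_Q (m : ℕ) (t : ℝ) : HasDerivAt (Q m) (DQ m t) t := by
  unfold Q DQ
  apply HasDerivAt.fun_sum
  intro k _
  simpa using (hasDerivAt_pow k t).const_mul (a m k)

lemma Qrec (m : ℕ) (t : ℝ) :
    Q (m+1) t = Q m t + 2/(2*(m:ℝ)+1) * t * ((m:ℝ)^2 * Q m t - DQ m t) := by
  have h2m : (2*(m:ℝ)+1) ≠ 0 := by positivity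
  have hterm : ∀ k : ℕ, a m k * t ^ k + 2/(2*(m:ℝ)+1) * t *
        ((m:ℝ)^2 * (a m k * t ^ k) - a m k * ((k:ℝ) * t ^ (k-1))) =
      a m k * (1 - 2*(k:ℝ)/(2*(m:ℝ)+1)) * t ^ k
        + (2*(m:ℝ)^2/(2*(m:ℝ)+1)) * a m k * t ^ (k+1) := by
    intro k
    cases k with
    | zero => push_cast; field_simp; ring
    | succ n => rw [Nat.add_sub_cancel]; push_cast; field_simp; ring
  have hrhs : Q m t + 2/(2*(m:ℝ)+1) * t * ((m:ℝ)^2 * Q m t - DQ m t) =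
      (∑ k ∈ Finset.range (m+1), a m k * (1 - 2*(k:ℝ)/(2*(m:ℝ)+1)) * t ^ k)
      + ∑ k ∈ Finset.range (m+1), (2*(m:ℝ)^2/(2*(m:ℝ)+1)) * a m k * t ^ (k+1) := by
    unfold Q DQ
    simp only [Finset.mul_sum, ← Finset.sum_sub_distrib, ← Finset.sum_add_distrib]
    exact Finset.sum_congr rfl fun k _ => hterm k
  rw [hrhs]
  show ∑ k ∈ Finset.range (m+1+1), a (m+1) k * t ^ k = _
  rw [Finset.sum_range_succ' (fun k => a (m+1) k * t ^ k) (m+1)]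
  have h1 : ∀ k ∈ Finset.range (m+1), a (m+1) (k+1) * t^(k+1) =
      a m (k+1) * (1 - 2*((k:ℝ)+1)/(2*(m:ℝ)+1)) * t^(k+1)
        + (2*(m:ℝ)^2/(2*(m:ℝ)+1)) * a m k * t^(k+1) := fun k _ => by rw [key]; ring
  rw [Finset.sum_congr rfl h1, Finset.sum_add_distrib]
  have h2 : (∑ k ∈ Finset.range (m+1),
        a m (k+1) * (1 - 2*((k:ℝ)+1)/(2*(m:ℝ)+1)) * t^(k+1)) + a (m+1) 0 * t^0 =
      ∑ k ∈ Finset.range (m+2), a m k * (1 - 2*(k:ℝ)/(2*(m:ℝ)+1)) * t ^ k := by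
    rw [Finset.sum_range_succ'
      (fun k => a m k * (1 - 2*(k:ℝ)/(2*(m:ℝ)+1)) * t ^ k) (m+1)]
    congr 1
    · exact Finset.sum_congr rfl fun k _ => by push_cast; ring_nf
    · simp [a_zero]
  have h3 : ∑ k ∈ Finset.range (m+2), a m k * (1 - 2*(k:ℝ)/(2*(m:ℝ)+1)) * t ^ k =
      ∑ k ∈ Finset.range (m+1), a m k * (1 - 2*(k:ℝ)/(2*(m:ℝ)+1)) * t ^ k := by
    rw [Finset.sum_range_succ, a_eq_zero (Nat.le_succ m) (by omega)]
    simp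
  calc _ = ((∑ k ∈ Finset.range (m+1),
        a m (k+1) * (1 - 2*((k:ℝ)+1)/(2*(m:ℝ)+1)) * t^(k+1)) + a (m+1) 0 * t^0)
        + ∑ k ∈ Finset.range (m+1), (2*(m:ℝ)^2/(2*(m:ℝ)+1)) * a m k * t^(k+1) := by ring
    _ = _ := by rw [h2, h3]

noncomputable def E (m : ℕ) : ℝ := -(2*(m:ℝ)+1)/2
noncomputable def F (m : ℕ) (t : ℝ) : ℝ :=
  (4*π) ^ (E m) * t ^ (E m) * Real.exp (-(m:ℝ)^2 * t) * Q m t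

noncomputable def F' (m : ℕ) (t : ℝ) : ℝ :=
  (4*π) ^ (E m) * (E m * t ^ (E m - 1) * Real.exp (-(m:ℝ)^2 * t) * Q m t
    + t ^ (E m) * (-(m:ℝ)^2 * Real.exp (-(m:ℝ)^2 * t)) * Q m t
    + t ^ (E m) * Real.exp (-(m:ℝ)^2 * t) * DQ m t)

lemma hasDerivAt_F (m : ℕ) {t : ℝ} (ht : 0 < t) : HasDerivAt (F m) (F' m t) t := by
  have h1 : HasDerivAt (fun s : ℝ => s ^ E m) (E m * t ^ (E m - 1)) t :=
    Real.hasDerivAt_rpow_const (Or.inl ht.ne')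
  have h2 : HasDerivAt (fun s : ℝ => Real.exp (-(m:ℝ)^2 * s))
      (Real.exp (-(m:ℝ)^2 * t) * (-(m:ℝ)^2)) t :=
by simpa using ((hasDerivAt_id t).const_mul (-(m:ℝ)^2)).exp
  have h3 := hasDerivAt_Q m t
  have := ((h1.mul h2).mul h3).const_mul ((4*π) ^ (E m))
  have hF : F m = fun y => (4*π) ^ (E m) * (((fun s : ℝ => s ^ E m) * fun s => Real.exp (-(m:ℝ)^2 * s)) * Q m) y := by
    funext s; unfold F; simp only [Pi.mul_apply]; ring
  rw [hF]
  exact this.congr_deriv (by unfold F'; simp only [Pi.mul_apply]; ring)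

lemma Falg (m : ℕ) {t : ℝ} (ht : 0 < t) :
    F (m+1) t = -(Real.exp (-(2*(m:ℝ)+1) * t) / (2 * (2*(m:ℝ)+1) * π)) * F' m t := by
  have hπ : (0:ℝ) < π := Real.pi_pos
  have h2m : (2*(m:ℝ)+1) ≠ 0 := by positivity
  have eE : E (m+1) = E m - 1 := by unfold E; push_cast; ring
  have hP : (4*π) ^ (E m) = (4*π) ^ (E m - 1) * (4*π) := by
    rw [Real.rpow_sub (by positivity), Real.rpow_one]
    field_simp
  have hT : t ^ (E m) = t ^ (E m - 1) * t := by
    rw [Real.rpow_sub ht, Real.rpow_one]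
    field_simp
  have hexp : Real.exp (-((m:ℝ)+1)^2 * t) =
      Real.exp (-(2*(m:ℝ)+1) * t) * Real.exp (-(m:ℝ)^2 * t) := by
    rw [← Real.exp_add]; congr 1; ring
  have hE : E m = -(2*(m:ℝ)+1)/2 := rfl
  unfold F F'
  rw [Qrec, eE, hP, hT]
  push_cast
  rw [hexp, hE]
  field_simp
  ring


/-- The diagonal of the heat kernel of the `(2m+1)`-dimensional hyperbolic space:
starting from `D₀(t) = (4πt)^{-1/2}` and iterating
`D_m(t) = -(e^{-(2m-1)t}/(2(2m-1)π)) D'_{m-1}(t)`, one has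
`D_m(t) = (4πt)^{-(2m+1)/2} e^{-m²t} Σ_{k=0}^{m-1} (Γ(m-k+1/2)/Γ(m+1/2)) c_{m,k} t^k`. -/
theorem hyperbolic_diagonal_heat_kernel (D : ℕ → ℝ → ℝ)
    (hD0 : ∀ t ∈ Set.Ioi (0 : ℝ), D 0 t = (4 * π * t) ^ (-(1 : ℝ) / 2))
    (hDrec : ∀ m : ℕ, 1 ≤ m → ∀ t ∈ Set.Ioi (0 : ℝ),
      D m t = -(Real.exp (-(2 * (m : ℝ) - 1) * t) / (2 * (2 * (m : ℝ) - 1) * π)) *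
        deriv (D (m - 1)) t) :
    ∀ m : ℕ, 1 ≤ m → ∀ t ∈ Set.Ioi (0 : ℝ),
      D m t = (4 * π * t) ^ (-(2 * (m : ℝ) + 1) / 2) * Real.exp (-(m : ℝ) ^ 2 * t) *
        ∑ k ∈ Finset.range m,
          Real.Gamma ((m : ℝ) - (k : ℝ) + 1 / 2) / Real.Gamma ((m : ℝ) + 1 / 2) *
            c m k * t ^ k := by
  have DF : ∀ m : ℕ, ∀ t ∈ Set.Ioi (0:ℝ), D m t = F m t := by
    intro m
    induction m with
    | zero =>
      intro t ht
      have ht' : (0:ℝ) < t := ht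
      rw [hD0 t ht]
      unfold F Q E
      rw [Real.mul_rpow (by positivity) ht'.le]
      norm_num [a_zero]
    | succ m ih =>
      intro t ht
      have ht' : (0:ℝ) < t := ht
      have hder : deriv (D m) t = F' m t := by
        have heq : D m =ᶠ[nhds t] F m := by
          filter_upwards [Ioi_mem_nhds ht'] with y hy using ih y hy
        rw [heq.deriv_eq]
        exact (hasDerivAt_F m ht').deriv
      rw [hDrec (m+1) (by omega) t ht, Nat.add_sub_cancel, hder,
        show (2*((m+1:ℕ):ℝ)-1) = 2*(m:ℝ)+1 by push_cast; ring, ← Falg m ht']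
  intro m hm t ht
  have ht' : (0:ℝ) < t := ht
  have hsum : Q m t = ∑ k ∈ Finset.range m,
      Real.Gamma ((m : ℝ) - (k : ℝ) + 1 / 2) / Real.Gamma ((m : ℝ) + 1 / 2) *
        c m k * t ^ k := by
    unfold Q
    rw [Finset.sum_range_succ, a_eq_zero (le_refl m) hm]
    simp [a, mul_assoc]
  rw [DF m t ht]
  unfold F
  rw [hsum, show E m = -(2*(m:ℝ)+1)/2 from rfl,
    ← Real.mul_rpow (by positivity) ht'.le]
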